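/- For every natural number k ≥ 2, every finite unit-distance graph G = (V,E) with E nonempty, and every periodic k-coloring c of the plane, one has m_k(G) ≤ p^per(c). (This is the left-hand inequality of Theorem 1.) -/

import Mathlib

open MeasureTheory Real

noncomputable section

abbrev Plane := EuclideanSpace ℝ (Fin 2)

def vec (x y : ℝ) : Plane := (WithLp.equiv 2 (Fin 2 → ℝ)).symm ![x, y]

def dir (θ : ℝ) : Plane := vec (Real.cos θ) (Real.sin θ)

/-- The fundamental parallelogram `{t•u + s•v : 0 ≤ t, s < 1}`. -/
def para (u v : Plane) : Set Plane :=
  {x | ∃ t s : ℝ, 0 ≤ t ∧ t < 1 ∧ 0 ≤ s ∧ s < 1 ∧ x = t • u + s • v}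

/-- `p^per(c)` for a periodic coloring with fundamental parallelogram `para u v`. -/
def pper {k : ℕ} (c : Plane → Fin k) (u v : Plane) : ℝ :=
  (1 / (2 * π * (volume (para u v)).toReal)) *
    ∫ a in para u v, ∫ θ in (0:ℝ)..(2*π),
      (if c a = c (a + dir θ) then (1:ℝ) else 0)

-- Number of monochromatic edges of `G` under the vertex coloring `χ`.
open Classical in
def monoCount {V : Type} [Fintype V] {k : ℕ} (G : SimpleGraph V) (χ : V → Fin k) : ℕ :=
  (G.edgeFinset.filter fun e => (e.map χ).IsDiag).card

-- `m_k(G)`: the least fraction of monochromatic edges over all `k`-colorings of `G`.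
open Classical in
def mval {V : Type} [Fintype V] (k : ℕ) (G : SimpleGraph V) : ℝ :=
  ⨅ χ : V → Fin k, (monoCount G χ : ℝ) / (G.edgeFinset.card : ℝ)

/-! ### Auxiliary geometry lemmas -/
lemma vec_zero (x y : ℝ) : vec x y 0 = x := rfl
lemma vec_one (x y : ℝ) : vec x y 1 = y := rfl

def rot (θ : ℝ) (x : Plane) : Plane := Real.cos θ • x + Real.sin θ • vec (-(x 1)) (x 0)

lemma plane_ext {x y : Plane} (h0 : x 0 = y 0) (h1 : x 1 = y 1) : x = y := by
  ext i
  fin_cases i <;> assumption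

lemma rot_apply0 (θ : ℝ) (x : Plane) : rot θ x 0 = Real.cos θ * x 0 - Real.sin θ * x 1 := by
  simp [rot, PiLp.add_apply, PiLp.smul_apply, vec_zero, smul_eq_mul]; ring

lemma rot_apply1 (θ : ℝ) (x : Plane) : rot θ x 1 = Real.cos θ * x 1 + Real.sin θ * x 0 := by
  simp [rot, PiLp.add_apply, PiLp.smul_apply, vec_one, smul_eq_mul]

lemma rot_add (θ : ℝ) (x y : Plane) : rot θ (x + y) = rot θ x + rot θ y := by
  apply plane_ext <;>
  simp only [PiLp.add_apply, rot_apply0, rot_apply1] <;> ring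

lemma rot_dir (θ φ : ℝ) : rot θ (dir φ) = dir (θ + φ) := by
  apply plane_ext
  · simp [rot_apply0, dir, vec_zero, vec_one, Real.cos_add]
  · simp [rot_apply1, dir, vec_zero, vec_one, Real.sin_add]; ring

lemma exists_dir {w : Plane} (hw : ‖w‖ = 1) : ∃ φ, w = dir φ := by
  have h : Real.sqrt (w 0 ^ 2 + w 1 ^ 2) = 1 := by
    rw [← hw, EuclideanSpace.norm_eq]
    simp [Fin.sum_univ_two, sq_abs]
  have h2 : w 0 ^ 2 + w 1 ^ 2 = 1 := by
    have := congrArg (· ^ 2) h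
    simpa [Real.sq_sqrt (by positivity : (0:ℝ) ≤ w 0 ^ 2 + w 1 ^ 2)] using this
  set z : ℂ := ⟨w 0, w 1⟩ with hz
  have hzabs : ‖z‖ = 1 := by
    rw [Complex.norm_def, Complex.normSq_mk]
    rw [show w 0 * w 0 + w 1 * w 1 = 1 by nlinarith]
    exact Real.sqrt_one
  have hz0 : z ≠ 0 := by
    intro h0; rw [h0] at hzabs; simp at hzabs
  refine ⟨Complex.arg z, ?_⟩
  apply plane_ext
  · show w 0 = Real.cos (Complex.arg z)
    have := Complex.cos_arg hz0
    rw [hzabs] at this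
    simpa [hz] using this.symm
  · show w 1 = Real.sin (Complex.arg z)
    have := Complex.sin_arg z
    rw [hzabs] at this
    simpa [hz] using this.symm

lemma cont_rot (p : Plane) : Continuous (fun z : Plane × ℝ => z.1 + rot z.2 p) := by
  apply continuous_fst.add
  unfold rot
  fun_prop

/-! ### Lattice lemmas -/

variable {u v : Plane} (huv : LinearIndependent ℝ ![u, v])

def bUV (huv : LinearIndependent ℝ ![u, v]) : Module.Basis (Fin 2) ℝ Plane :=
  basisOfLinearIndependentOfCardEqFinrank huv (by simp [finrank_euclideanSpace])

lemma bUV_zero : bUV huv 0 = u := by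
  simp [bUV, coe_basisOfLinearIndependentOfCardEqFinrank]

lemma bUV_one : bUV huv 1 = v := by
  simp [bUV, coe_basisOfLinearIndependentOfCardEqFinrank]

lemma para_eq : para u v = ZSpan.fundamentalDomain (bUV huv) := by
  ext x
  constructor
  · rintro ⟨t, s, ht0, ht1, hs0, hs1, rfl⟩
    intro i
    have huvb : t • u + s • v = t • bUV huv 0 + s • bUV huv 1 := by
      rw [bUV_zero huv, bUV_one huv]
    have : (bUV huv).repr (t • u + s • v) = t • Finsupp.single 0 1 + s • Finsupp.single 1 1 := by
      rw [huvb]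
      simp [map_add, _root_.map_smul, Module.Basis.repr_self]
    fin_cases i <;>
      simp [this, Finsupp.single_apply] <;> constructor <;> assumption
  · intro hx
    refine ⟨(bUV huv).repr x 0, (bUV huv).repr x 1, (hx 0).1, (hx 0).2, (hx 1).1, (hx 1).2, ?_⟩
    have := (bUV huv).sum_repr x
    rw [Fin.sum_univ_two, bUV_zero huv, bUV_one huv] at this
    exact this.symm

abbrev LatUV (huv : LinearIndependent ℝ ![u, v]) := Submodule.span ℤ (Set.range ⇑(bUV huv))

lemma lat_invariant {k : ℕ} {c : Plane → Fin k}
    (hper : ∀ x : Plane, c (x + u) = c x ∧ c (x + v) = c x) :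
    ∀ l ∈ LatUV huv, ∀ x, c (l + x) = c x := by
  intro l hl
  induction hl using Submodule.span_induction with
  | mem y hy =>
      obtain ⟨i, rfl⟩ := hy
      fin_cases i
      · intro x
        rw [show (bUV huv) ((fun i => i) (⟨0, by norm_num⟩ : Fin 2)) = u from bUV_zero huv, add_comm]
        exact (hper x).1
      · intro x
        rw [show (bUV huv) ((fun i => i) (⟨1, by norm_num⟩ : Fin 2)) = v from bUV_one huv, add_comm]
        exact (hper x).2
  | zero => intro x; rw [zero_add]
  | add y z _ _ hy hz => intro x; rw [add_assoc, hy, hz]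
  | smul n y _ hy =>
      have hneg : ∀ x, c (-y + x) = c x := by
        intro x
        conv_rhs => rw [show x = y + (-y + x) by abel, hy]
      intro x
      induction n using Int.induction_on with
      | zero => simp
      | succ m ih =>
          rw [show ((m:ℤ)+1) • y + x = y + ((m:ℤ) • y + x) by module, hy, ih]
      | pred m ih =>
          rw [show (-(m:ℤ)-1) • y + x = -y + ((-(m:ℤ)) • y + x) by module, hneg, ih]

lemma isFD_para : IsAddFundamentalDomain (LatUV huv) (para u v) volume := by
  rw [para_eq huv]; exact ZSpan.isAddFundamentalDomain _ _

lemma isFD_shift (w : Plane) :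
    IsAddFundamentalDomain (LatUV huv) ((fun x : Plane => x + w) ⁻¹' (para u v)) volume := by
  refine (isFD_para huv).preimage_of_equiv
    ((measurePreserving_add_right volume w).quasiMeasurePreserving) Function.bijective_id ?_
  intro g x
  show ((g : Plane) +ᵥ x) + w = (g : Plane) +ᵥ (x + w)
  simp only [vadd_eq_add, add_assoc]

instance : MeasurableVAdd (↥(LatUV huv)) Plane := by
  constructor
  · intro g
    exact (measurable_subtype_coe).add_const g

instance : VAddInvariantMeasure (↥(LatUV huv)) Plane volume := by
  constructor
  intro g s hs
  show volume ((fun x => (g : Plane) + x) ⁻¹' s) = volume s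
  exact measure_preimage_add volume (g : Plane) s

lemma integral_para_add (g : Plane → ℝ)
    (hg : ∀ l ∈ LatUV huv, ∀ x, g (l + x) = g x) (w : Plane) :
    ∫ a in para u v, g (a + w) = ∫ a in para u v, g a := by
  have hmp : MeasurePreserving (fun x : Plane => x + w) volume volume :=
    measurePreserving_add_right volume w
  have hemb : MeasurableEmbedding (fun x : Plane => x + w) :=
    (Homeomorph.addRight w).measurableEmbedding
  have hpre : (fun x : Plane => x + w) ⁻¹' ((fun x : Plane => x + (-w)) ⁻¹' (para u v))
      = para u v := by
    ext x; simp [Set.mem_preimage, add_assoc]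
  calc ∫ a in para u v, g (a + w)
      = ∫ x in (fun x : Plane => x + (-w)) ⁻¹' (para u v), g x := by
        conv_lhs => rw [← hpre]
        exact hmp.setIntegral_preimage_emb hemb g _
    _ = ∫ a in para u v, g a := by
        refine (isFD_shift huv (-w)).setIntegral_eq (isFD_para huv) ?_
        intro l x
        exact hg l l.2 x

lemma rot_zero (θ : ℝ) : rot θ (0 : Plane) = 0 := by
  apply plane_ext <;> simp [rot_apply0, rot_apply1]

lemma para_measurable (huv : LinearIndependent ℝ ![u, v]) : MeasurableSet (para u v) := by
  rw [para_eq huv]; exact ZSpan.fundamentalDomain_measurableSet _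

lemma para_vol_ne_top (huv : LinearIndependent ℝ ![u, v]) : volume (para u v) ≠ ⊤ := by
  rw [para_eq huv]
  exact ((ZSpan.fundamentalDomain_isBounded _).measure_lt_top).ne

lemma para_vol_ne_zero (huv : LinearIndependent ℝ ![u, v]) : volume (para u v) ≠ 0 := by
  rw [para_eq huv]
  exact ZSpan.measure_fundamentalDomain_ne_zero _

/-- Left-hand inequality of Theorem 1: for every finite unit-distance graph `G` with at
least one edge and every periodic `k`-coloring `c` of the plane, `m_k(G) ≤ p^per(c)`. -/
theorem stmt0 (k : ℕ) (hk : 2 ≤ k) {V : Type} [Fintype V] (G : SimpleGraph V)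
    (hE : G.edgeSet.Nonempty)
    (hUD : ∃ f : V → Plane, ∀ i j : V, G.Adj i j → dist (f i) (f j) = 1)
    (c : Plane → Fin k) (hc : Measurable c) (u v : Plane)
    (huv : LinearIndependent ℝ ![u, v])
    (hper : ∀ x : Plane, c (x + u) = c x ∧ c (x + v) = c x) :
    mval k G ≤ pper c u v := by
  classical
  obtain ⟨f, hf⟩ := hUD
  have hπ2 : (0:ℝ) < 2 * π := by positivity
  have hPm : MeasurableSet (para u v) := para_measurable huv
  have hPfin : volume (para u v) ≠ ⊤ := para_vol_ne_top huv
  have hPpos : volume (para u v) ≠ 0 := para_vol_ne_zero huv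
  set A : ℝ := (volume (para u v)).toReal with hA
  have hApos : 0 < A := ENNReal.toReal_pos hPpos hPfin
  set μP : Measure Plane := volume.restrict (para u v) with hμP
  set νθ : Measure ℝ := volume.restrict (Set.Ioc (0:ℝ) (2*π)) with hνθ
  haveI : IsFiniteMeasure μP := ⟨by
    rw [hμP, Measure.restrict_apply_univ]; exact lt_top_iff_ne_top.2 hPfin⟩
  haveI : IsFiniteMeasure νθ := ⟨by
    rw [hνθ, Measure.restrict_apply_univ, Real.volume_Ioc]
    exact ENNReal.ofReal_lt_top⟩
  set ρ : Measure (Plane × ℝ) := μP.prod νθ with hρ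
  -- generic integrability of indicator-type functions
  have hintGen : ∀ (g₁ g₂ : Plane × ℝ → Plane), Continuous g₁ → Continuous g₂ →
      Integrable (fun z => if c (g₁ z) = c (g₂ z) then (1:ℝ) else 0) ρ := by
    intro g₁ g₂ hg₁ hg₂
    have hm : Measurable (fun z => if c (g₁ z) = c (g₂ z) then (1:ℝ) else 0) := by
      refine Measurable.ite ?_ measurable_const measurable_const
      exact measurableSet_eq_fun (hc.comp hg₁.measurable) (hc.comp hg₂.measurable)
    refine ⟨hm.aestronglyMeasurable, ?_⟩
    refine HasFiniteIntegral.of_bounded (C := 1) ?_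
    filter_upwards with z
    split <;> simp
  have hcontdir : Continuous (fun z : Plane × ℝ => z.1 + dir z.2) := by
    have := cont_rot (dir 0)
    simp only [rot_dir, add_zero] at this
    exact this
  -- the basic indicator
  set ind0 : Plane × ℝ → ℝ := fun z => if c z.1 = c (z.1 + dir z.2) then 1 else 0 with hind0
  have hint0 : Integrable ind0 ρ := hintGen _ _ continuous_fst hcontdir
  have hint : ∀ p q : Plane, Integrable (fun z : Plane × ℝ =>
      if c (z.1 + rot z.2 p) = c (z.1 + rot z.2 q) then (1:ℝ) else 0) ρ := by
    intro p q
    exact hintGen _ _ (cont_rot p) (cont_rot q)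
  set I : ℝ := ∫ z, ind0 z ∂ρ with hI
  -- rewrite pper
  have hpper : pper c u v = (1 / (2 * π * A)) * I := by
    rw [pper, hI, MeasureTheory.integral_prod _ hint0]
    congr 1
    refine integral_congr_ae (Filter.Eventually.of_forall fun a => ?_)
    show (∫ θ in (0:ℝ)..(2*π), (if c a = c (a + dir θ) then (1:ℝ) else 0))
      = ∫ θ, ind0 (a, θ) ∂νθ
    rw [intervalIntegral.integral_of_le hπ2.le]
  -- lattice invariance of c
  have hcL : ∀ l ∈ LatUV huv, ∀ x, c (l + x) = c x := lat_invariant huv hper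
  -- the function h
  set h : ℝ → ℝ := fun t => ∫ a in para u v, (if c a = c (a + dir t) then (1:ℝ) else 0)
    with hh
  have hIθ : I = ∫ θ, h θ ∂νθ := by
    rw [hI, MeasureTheory.integral_prod_symm _ hint0]
  have hperh : Function.Periodic h (2*π) := by
    intro t
    simp only [hh, dir, Real.cos_add_two_pi, Real.sin_add_two_pi]
    rfl
  -- edge indicator functions
  set inde : Sym2 V → Plane × ℝ → ℝ := fun e z =>
    if (e.map fun i => c (z.1 + rot z.2 (f i))).IsDiag then 1 else 0 with hinde
  have hinde_pair : ∀ (i j : V), inde s(i,j) = fun z : Plane × ℝ =>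
      if c (z.1 + rot z.2 (f i)) = c (z.1 + rot z.2 (f j)) then (1:ℝ) else 0 := by
    intro i j
    funext z
    simp only [hinde, Sym2.map_pair_eq, Sym2.mk_isDiag_iff]
  have hinte : ∀ e ∈ G.edgeFinset, Integrable (inde e) ρ := by
    intro e _
    induction e using Sym2.ind with
    | _ i j => rw [hinde_pair i j]; exact hint (f i) (f j)
  -- per-edge integral equals I
  have hedge : ∀ e ∈ G.edgeFinset, ∫ z, inde e z ∂ρ = I := by
    intro e he
    induction e using Sym2.ind with
    | _ i j =>
    have hadj : G.Adj i j := by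
      rwa [SimpleGraph.mem_edgeFinset, SimpleGraph.mem_edgeSet] at he
    have hd : ‖f j - f i‖ = 1 := by
      rw [← dist_eq_norm']
      exact hf i j hadj
    obtain ⟨φ, hφ⟩ := exists_dir hd
    have hfj : ∀ (θ : ℝ) (a : Plane),
        a + rot θ (f j) = (a + rot θ (f i)) + dir (θ + φ) := by
      intro θ a
      rw [← rot_dir θ φ, ← hφ, add_assoc, ← rot_add,
        show f i + (f j - f i) = f j by abel]
    rw [hinde_pair i j, MeasureTheory.integral_prod_symm _ (hint (f i) (f j))]
    have hinner : ∀ θ : ℝ,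
        (∫ a, (if c (a + rot θ (f i)) = c (a + rot θ (f j)) then (1:ℝ) else 0) ∂μP)
          = h (θ + φ) := by
      intro θ
      have heq : ∀ a : Plane,
          (if c (a + rot θ (f i)) = c (a + rot θ (f j)) then (1:ℝ) else 0)
            = (fun x => if c x = c (x + dir (θ + φ)) then (1:ℝ) else 0)
              (a + rot θ (f i)) := by
        intro a
        simp only [hfj θ a]
      calc (∫ a, (if c (a + rot θ (f i)) = c (a + rot θ (f j)) then (1:ℝ) else 0) ∂μP)
          = ∫ a in para u v, (fun x => if c x = c (x + dir (θ + φ)) then (1:ℝ) else 0)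
              (a + rot θ (f i)) := by
            rw [hμP]
            exact integral_congr_ae (Filter.Eventually.of_forall fun a => heq a)
        _ = ∫ a in para u v, (if c a = c (a + dir (θ + φ)) then (1:ℝ) else 0) := by
            refine integral_para_add huv
              (fun x => if c x = c (x + dir (θ + φ)) then (1:ℝ) else 0) ?_ (rot θ (f i))
            intro l hl x
            rw [hcL l hl x, add_assoc, hcL l hl (x + dir (θ + φ))]
        _ = h (θ + φ) := rfl
    calc (∫ θ, ∫ a, (if c (a + rot θ (f i)) = c (a + rot θ (f j)) then (1:ℝ) else 0) ∂μP ∂νθ)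
        = ∫ θ, h (θ + φ) ∂νθ := by
          exact integral_congr_ae (Filter.Eventually.of_forall fun θ => hinner θ)
      _ = ∫ θ, h θ ∂νθ := by
          rw [hνθ]
          rw [← intervalIntegral.integral_of_le hπ2.le, ← intervalIntegral.integral_of_le hπ2.le,
            intervalIntegral.integral_comp_add_right h φ]
          have := hperh.intervalIntegral_add_eq φ 0
          simpa [zero_add, add_comm] using this
      _ = I := hIθ.symm
  -- number of edges
  set N : ℕ := G.edgeFinset.card with hN
  have hNpos : 0 < N := by
    rw [hN, Finset.card_pos]
    exact Set.toFinset_nonempty.mpr hE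
  have hNR : (0:ℝ) < N := by exact_mod_cast hNpos
  -- the fraction function
  set F : Plane × ℝ → ℝ := fun z =>
    (monoCount G (fun i => c (z.1 + rot z.2 (f i))) : ℝ) / N with hF
  have hmono : ∀ (χ : V → Fin k), (monoCount G χ : ℝ)
      = ∑ e ∈ G.edgeFinset, (if (e.map χ).IsDiag then (1:ℝ) else 0) := by
    intro χ
    rw [monoCount, Finset.card_filter, Nat.cast_sum]
    refine Finset.sum_congr rfl fun e _ => ?_
    by_cases hcase : (e.map χ).IsDiag <;> simp [hcase]
  have hFsum : F = fun z => (1/(N:ℝ)) * ∑ e ∈ G.edgeFinset, inde e z := by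
    funext z
    simp only [hF]
    rw [hmono]
    simp only [hinde]
    ring
  have hFint : Integrable F ρ := by
    rw [hFsum]
    exact (integrable_finset_sum _ hinte).const_mul _
  have hsum : ∫ z, F z ∂ρ = I := by
    rw [hFsum]
    rw [MeasureTheory.integral_const_mul, integral_finset_sum _ hinte,
      Finset.sum_congr rfl hedge, Finset.sum_const, nsmul_eq_mul, ← hN,
      ← mul_assoc, one_div_mul_cancel hNR.ne', one_mul]
  -- lower bound
  have hρuniv : (ρ Set.univ).toReal = A * (2*π) := by
    rw [hρ, ← Set.univ_prod_univ, Measure.prod_prod, hμP, hνθ,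
      Measure.restrict_apply_univ, Measure.restrict_apply_univ, Real.volume_Ioc]
    rw [ENNReal.toReal_mul, hA, ENNReal.toReal_ofReal (by linarith)]
    ring_nf
  have hlow : mval k G * (A * (2*π)) ≤ I := by
    rw [← hsum]
    have hconst : ∫ _z, (mval k G) ∂ρ = mval k G * (A * (2*π)) := by
      rw [integral_const, measureReal_def, hρuniv, smul_eq_mul, mul_comm]
    rw [← hconst]
    refine integral_mono (integrable_const _) hFint ?_
    intro z
    have hbdd : BddBelow (Set.range fun χ : V → Fin k => (monoCount G χ : ℝ) / N) := by
      refine ⟨0, ?_⟩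
      rintro _ ⟨χ, rfl⟩
      exact div_nonneg (Nat.cast_nonneg _) (Nat.cast_nonneg _)
    exact ciInf_le hbdd _
  have h1 : (0:ℝ) < 2 * π * A := by positivity
  have h2 : mval k G ≤ I / (2 * π * A) := by
    rw [le_div_iff₀ h1]
    calc mval k G * (2 * π * A) = mval k G * (A * (2*π)) := by ring
      _ ≤ I := hlow
  rw [hpper, one_div_mul_eq_div]
  exact h2

end
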